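/- Let Λ : R^d → R be continuously differentiable with Λ(rθ) ~ w(θ) r² as r → +∞ for every θ ∈ R^d (for some function w), and suppose sup_{θ≠0} ‖∇Λ(θ)‖/‖θ‖ < ∞. Then for every θ, θ₀ ∈ R^d, Λ(rθ + θ₀) ~ w(θ) r² as r → +∞. -/

import Mathlib

open Filter Real

/-- Let `Λ : ℝ^d → ℝ` be continuously differentiable with
`Λ(rθ) ~ w(θ) r²` as `r → +∞` for every `θ` and with `‖∇Λ(θ)‖ ≤ C‖θ‖` uniformly.
Then for every `θ, θ₀`, `Λ(rθ + θ₀) ~ w(θ) r²` as `r → +∞`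
(in the sense that `Λ(rθ + θ₀)/r² → w(θ)`). -/
theorem cgf_asymptotically_quadratic_shift
    (d : ℕ) (Λ : EuclideanSpace ℝ (Fin d) → ℝ) (w : EuclideanSpace ℝ (Fin d) → ℝ)
    (hC1 : ContDiff ℝ 1 Λ)
    (hasym : ∀ θ, Tendsto (fun r : ℝ => Λ (r • θ) / r ^ 2) atTop (nhds (w θ)))
    (hgrad : ∃ C : ℝ, ∀ θ : EuclideanSpace ℝ (Fin d), θ ≠ 0 →
      ‖gradient Λ θ‖ ≤ C * ‖θ‖) :
    ∀ θ θ₀ : EuclideanSpace ℝ (Fin d),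
      Tendsto (fun r : ℝ => Λ (r • θ + θ₀) / r ^ 2) atTop (nhds (w θ)) := by
  intro θ θ₀
  rcases subsingleton_or_nontrivial (EuclideanSpace ℝ (Fin d)) with hsub | hnt
  · have h : ∀ r : ℝ, r • θ + θ₀ = r • θ := fun r => Subsingleton.elim _ _
    simpa [h] using hasym θ
  obtain ⟨C, hC⟩ := hgrad
  set C' := max C 0 with hC'def
  have hC'0 : 0 ≤ C' := le_max_right _ _
  have hdiff : Differentiable ℝ Λ := hC1.differentiable one_ne_zero
  have hgradnorm : ∀ x, ‖gradient Λ x‖ = ‖fderiv ℝ Λ x‖ := by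
    intro x
    rw [gradient]
    exact (InnerProductSpace.toDual ℝ _).symm.norm_map _
  have hne : ∀ x : EuclideanSpace ℝ (Fin d), x ≠ 0 → ‖fderiv ℝ Λ x‖ ≤ C' * ‖x‖ := by
    intro x hx
    calc ‖fderiv ℝ Λ x‖ = ‖gradient Λ x‖ := (hgradnorm x).symm
      _ ≤ C * ‖x‖ := hC x hx
      _ ≤ C' * ‖x‖ := mul_le_mul_of_nonneg_right (le_max_left _ _) (norm_nonneg _)
  have hF : ∀ x : EuclideanSpace ℝ (Fin d), ‖fderiv ℝ Λ x‖ ≤ C' * ‖x‖ := by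
    intro x
    by_cases hx : x = 0
    · subst hx
      have hcont : Tendsto (fun y => ‖fderiv ℝ Λ y‖)
          (nhdsWithin (0:EuclideanSpace ℝ (Fin d)) {(0:EuclideanSpace ℝ (Fin d))}ᶜ)
          (nhds ‖fderiv ℝ Λ (0:EuclideanSpace ℝ (Fin d))‖) :=
        (((hC1.continuous_fderiv one_ne_zero).norm.tendsto _).mono_left nhdsWithin_le_nhds)
      have hbnd : Tendsto (fun y : EuclideanSpace ℝ (Fin d) => C' * ‖y‖)
          (nhdsWithin (0:EuclideanSpace ℝ (Fin d)) {(0:EuclideanSpace ℝ (Fin d))}ᶜ)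
          (nhds (C' * ‖(0:EuclideanSpace ℝ (Fin d))‖)) :=
        ((continuous_const.mul continuous_norm).tendsto _).mono_left nhdsWithin_le_nhds
      refine le_of_tendsto_of_tendsto hcont hbnd ?_
      filter_upwards [self_mem_nhdsWithin] with y hy
      exact hne y hy
    · exact hne x hx
  have key : ∀ r : ℝ, 1 ≤ r →
      |Λ (r • θ + θ₀) - Λ (r • θ)| ≤ C' * (r * (‖θ‖ + ‖θ₀‖)) * ‖θ₀‖ := by
    intro r hr
    have hr0 : (0:ℝ) ≤ r := le_trans zero_le_one hr
    set R := r * (‖θ‖ + ‖θ₀‖) with hRdef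
    have hmem1 : r • θ ∈ Metric.closedBall (0:EuclideanSpace ℝ (Fin d)) R := by
      simp only [Metric.mem_closedBall, dist_zero_right]
      rw [norm_smul, Real.norm_of_nonneg hr0]
      nlinarith [norm_nonneg θ₀]
    have hmem2 : r • θ + θ₀ ∈ Metric.closedBall (0:EuclideanSpace ℝ (Fin d)) R := by
      simp only [Metric.mem_closedBall, dist_zero_right]
      calc ‖r • θ + θ₀‖ ≤ ‖r • θ‖ + ‖θ₀‖ := norm_add_le _ _
        _ = r * ‖θ‖ + ‖θ₀‖ := by rw [norm_smul, Real.norm_of_nonneg hr0]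
        _ ≤ R := by nlinarith [norm_nonneg θ₀, norm_nonneg θ]
    have hmvt := (convex_closedBall (0:EuclideanSpace ℝ (Fin d)) R).norm_image_sub_le_of_norm_fderiv_le
      (fun x _ => hdiff x)
      (fun x hx => le_trans (hF x) (mul_le_mul_of_nonneg_left
        (by simpa [dist_zero_right] using hx) hC'0)) hmem1 hmem2
    calc |Λ (r • θ + θ₀) - Λ (r • θ)| ≤ C' * R * ‖r • θ + θ₀ - r • θ‖ := hmvt
      _ = C' * R * ‖θ₀‖ := by simp
  set K := C' * (‖θ‖ + ‖θ₀‖) * ‖θ₀‖ with hKdef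
  have h0 : Tendsto (fun r : ℝ => (Λ (r • θ + θ₀) - Λ (r • θ)) / r ^ 2) atTop (nhds 0) := by
    have hKtend : Tendsto (fun r : ℝ => K / r) atTop (nhds 0) :=
      tendsto_const_nhds.div_atTop tendsto_id
    refine squeeze_zero_norm' ?_ hKtend
    filter_upwards [eventually_ge_atTop (1:ℝ)] with r hr
    have hr0 : (0:ℝ) < r := lt_of_lt_of_le one_pos hr
    rw [Real.norm_eq_abs, abs_div, abs_of_pos (by positivity : (0:ℝ) < r ^ 2),
      div_le_div_iff₀ (by positivity) hr0]
    have hk := key r hr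
    nlinarith [abs_nonneg (Λ (r • θ + θ₀) - Λ (r • θ)), norm_nonneg θ₀,
      mul_le_mul_of_nonneg_right hk hr0.le]
  have := (hasym θ).add h0
  simp only [add_zero] at this
  refine this.congr fun r => ?_
  ring
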